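/- Let a, b > 0 and let z = x + yi with x = (a² - b² + 1)/2 and y > 0, y² = (b² - (a-1)²)((a+1)² - b²)/4 (so |z| = a, |z-1| = b). Then the argument θ of w = -ρ(z-ρ)/(z-ρ⁻¹) satisfies tan θ = √3·(b² - 1)/(2a² - b² - 1), provided 2a² - b² - 1 ≠ 0, where ρ = exp(πi/3). Equivalently, Im(w)/Re(w) = √3(x² + y² - 2x)/(x² + y² + 2x - 2). -/
import Mathlib


open Complex Real

noncomputable def ρ : ℂ := Complex.exp (Real.pi * Complex.I / 3)

theorem stmt14 (a b x y : ℝ) (ha : 0 < a) (hb : 0 < b)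
    (hx : x = (a ^ 2 - b ^ 2 + 1) / 2) (hy : 0 < y)
    (hy2 : y ^ 2 = (b ^ 2 - (a - 1) ^ 2) * ((a + 1) ^ 2 - b ^ 2) / 4)
    (hden : 2 * a ^ 2 - b ^ 2 - 1 ≠ 0)
    (z w : ℂ) (hz : z = (x : ℂ) + (y : ℂ) * Complex.I)
    (hw : w = -ρ * (z - ρ) / (z - ρ⁻¹)) :
    w.im / w.re = Real.sqrt 3 * (b ^ 2 - 1) / (2 * a ^ 2 - b ^ 2 - 1) ∧
    w.im / w.re = Real.sqrt 3 * (x ^ 2 + y ^ 2 - 2 * x) / (x ^ 2 + y ^ 2 + 2 * x - 2) := by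
  set s : ℝ := Real.sqrt 3 with hsdef
  have hs2 : s ^ 2 = 3 := Real.sq_sqrt (by norm_num)
  have hspos : 0 < s := Real.sqrt_pos.mpr (by norm_num)
  have hs3 : s ^ 3 = 3 * s := by rw [pow_succ, hs2]
  have hρ : ρ = ⟨1/2, s/2⟩ := by
    apply Complex.ext
    · simp [ρ, Complex.exp_re]
    · simp [ρ, Complex.exp_im, hsdef]
  have hρinv : ρ⁻¹ = ⟨1/2, -(s/2)⟩ := by
    apply inv_eq_of_mul_eq_one_right
    rw [hρ]
    apply Complex.ext <;> simp [Complex.mul_re, Complex.mul_im] <;> nlinarith [hs2]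
  have hr2 : x ^ 2 + y ^ 2 = a ^ 2 := by rw [hx, hy2]; ring
  have hBa : x ^ 2 + y ^ 2 + 2 * x - 2 = 2 * a ^ 2 - b ^ 2 - 1 := by
    rw [hr2, hx]; ring
  have hNa : x ^ 2 + y ^ 2 - 2 * x = b ^ 2 - 1 := by
    rw [hr2, hx]; ring
  have hB : x ^ 2 + y ^ 2 + 2 * x - 2 ≠ 0 := by rw [hBa]; exact hden
  have hwre : w.re = ((1 - x - (x^2+y^2)/2)) /
      (1/4 - x + x^2 + y*s + y^2 + s^2*(1/4)) := by
    rw [hw, hz, hρinv, hρ]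
    simp only [Complex.div_re, Complex.normSq_apply, Complex.mul_re, Complex.mul_im,
      Complex.sub_re, Complex.sub_im, Complex.add_re, Complex.add_im, Complex.neg_re,
      Complex.neg_im, Complex.I_re, Complex.I_im, Complex.ofReal_re, Complex.ofReal_im]
    ring_nf
    rw [hs2]
    ring_nf
  have hwim : w.im = (s*(2*x - (x^2+y^2))/2) /
      (1/4 - x + x^2 + y*s + y^2 + s^2*(1/4)) := by
    rw [hw, hz, hρinv, hρ]
    simp only [Complex.div_im, Complex.normSq_apply, Complex.mul_re, Complex.mul_im,
      Complex.sub_re, Complex.sub_im, Complex.add_re, Complex.add_im, Complex.neg_re,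
      Complex.neg_im, Complex.I_re, Complex.I_im, Complex.ofReal_re, Complex.ofReal_im]
    ring_nf
    rw [hs2, hs3]
    ring_nf
  have hD : (1/4 - x + x^2 + y*s + y^2 + s^2*(1/4)) ≠ 0 := by
    have h : (1/4 - x + x^2 + y*s + y^2 + s^2*(1/4)) = (x - 1/2)^2 + (y + s/2)^2 := by ring
    rw [h]; positivity
  have hB' : (1 - x - (x^2+y^2)/2) ≠ 0 := by
    intro h; apply hB; nlinarith [h]
  have key : w.im / w.re = s * (x ^ 2 + y ^ 2 - 2 * x) / (x ^ 2 + y ^ 2 + 2 * x - 2) := by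
    rw [hwre, hwim, div_div_div_cancel_right₀ hD]
    rw [div_eq_div_iff hB' hB]
    ring
  refine ⟨?_, key⟩
  rw [key, hNa, hBa]
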